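/- Fix n, m > 0 and 0 < a₁ < a₂. Let y : (0,1) → (0,1) be the push-forward map defined by F_{a₂}(y(x)) = F_{a₁}(x), where F_a is the Beta(na, ma) c.d.f. Then lim_{x→0⁺} y'(x) = +∞ and lim_{x→1⁻} y'(x) = +∞. -/

import Mathlib

open Filter Set intervalIntegral Real MeasureTheory

lemma pow_sandwich15 {z : ℝ} (c : ℝ) (h1 : 1/2 ≤ z) (h2 : z ≤ 1) :
    min 1 ((1/2:ℝ) ^ c) ≤ z ^ c ∧ z ^ c ≤ max 1 ((1/2:ℝ) ^ c) := by
  rcases le_or_gt 0 c with hc | hc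
  · constructor
    · exact le_trans (min_le_right _ _) (Real.rpow_le_rpow (by norm_num) h1 hc)
    · exact le_trans (Real.rpow_le_one (by linarith) h2 hc) (le_max_left _ _)
  · constructor
    · refine le_trans (min_le_left _ _) ?_
      calc (1:ℝ) = 1 ^ c := (Real.one_rpow c).symm
        _ ≤ z ^ c := Real.rpow_le_rpow_of_nonpos (by linarith) h2 hc.le
    · exact le_trans (Real.rpow_le_rpow_of_nonpos (by norm_num) h1 hc.le) (le_max_right _ _)

lemma integrable_g15 {α β : ℝ} (hα : 0 < α) (hβ : 0 < β) {c d : ℝ}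
    (hc : 0 ≤ c) (hc1 : c ≤ 1) (hd : 0 ≤ d) (hd1 : d ≤ 1) :
    IntervalIntegrable (fun t => t ^ (α-1) * (1-t) ^ (β-1)) volume c d := by
  have h1 : IntervalIntegrable (fun t => t ^ (α-1) * (1-t) ^ (β-1)) volume 0 (1/2) := by
    apply (intervalIntegral.intervalIntegrable_rpow' (by linarith)).mul_continuousOn
    apply ContinuousOn.rpow_const (by fun_prop)
    intro x hx
    rw [Set.uIcc_of_le (by norm_num : (0:ℝ) ≤ 1/2)] at hx
    left
    intro h
    rw [sub_eq_zero] at h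
    have := hx.2; linarith [h]
  have h2 : IntervalIntegrable (fun t => t ^ (α-1) * (1-t) ^ (β-1)) volume (1/2) 1 := by
    have hb : IntervalIntegrable (fun t => (1-t) ^ (β-1)) volume (1/2) 1 := by
      have h := (intervalIntegral.intervalIntegrable_rpow' (a := 0) (b := 1/2)
        (by linarith : (-1:ℝ) < β - 1)).comp_sub_left 1
      norm_num at h
      exact h.symm
    apply hb.continuousOn_mul
    apply ContinuousOn.rpow_const (by fun_prop)
    intro x hx
    rw [Set.uIcc_of_le (by norm_num : (1/2:ℝ) ≤ 1)] at hx
    left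
    intro h; rw [h] at hx; norm_num at hx
  have h01 := h1.trans h2
  apply h01.mono_set
  apply Set.uIcc_subset_uIcc
  · rw [Set.uIcc_of_le (by norm_num : (0:ℝ) ≤ 1)]; exact ⟨hc, hc1⟩
  · rw [Set.uIcc_of_le (by norm_num : (0:ℝ) ≤ 1)]; exact ⟨hd, hd1⟩

lemma int_pos15 {α β : ℝ} (hα : 0 < α) (hβ : 0 < β) {s : ℝ} (hs : 0 < s) (hs1 : s ≤ 1) :
    0 < ∫ t in (0:ℝ)..s, t ^ (α-1) * (1-t) ^ (β-1) := by
  apply intervalIntegral.intervalIntegral_pos_of_pos_on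
    (integrable_g15 hα hβ le_rfl (by norm_num) hs.le hs1)
  · intro t ht
    have h1 : 0 < t := ht.1
    have h2 : 0 < 1 - t := by have := ht.2; linarith
    exact mul_pos (Real.rpow_pos_of_pos h1 _) (Real.rpow_pos_of_pos h2 _)
  · exact hs

lemma int_mono_end15 {α β s u : ℝ} (hα : 0 < α) (hβ : 0 < β) (hs : 0 ≤ s) (hsu : s ≤ u)
    (hu : u ≤ 1) :
    ∫ t in (0:ℝ)..s, t ^ (α-1) * (1-t) ^ (β-1) ≤ ∫ t in (0:ℝ)..u, t ^ (α-1) * (1-t) ^ (β-1) := by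
  have h1 := integrable_g15 hα hβ le_rfl (by norm_num) hs (le_trans hsu hu)
  have h2 := integrable_g15 hα hβ hs (le_trans hsu hu) (le_trans hs hsu) hu
  rw [← intervalIntegral.integral_add_adjacent_intervals h1 h2]
  have h3 : 0 ≤ ∫ t in s..u, t ^ (α-1) * (1-t) ^ (β-1) := by
    apply intervalIntegral.integral_nonneg hsu
    intro t ht
    exact mul_nonneg (Real.rpow_nonneg (le_trans hs ht.1) _)
      (Real.rpow_nonneg (by have := ht.2; linarith) _)
  linarith

lemma int_upper15 {α β x : ℝ} (hα : 0 < α) (hβ : 0 < β) (hx : 0 < x) (hx2 : x ≤ 1/2) :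
    ∫ t in (0:ℝ)..x, t ^ (α-1) * (1-t) ^ (β-1) ≤ max 1 ((1/2:ℝ) ^ (β-1)) * (x ^ α / α) := by
  have hM1 : (1:ℝ) ≤ max 1 ((1/2:ℝ) ^ (β-1)) := le_max_left _ _
  have h1 : ∫ t in (0:ℝ)..x, t ^ (α-1) * (1-t) ^ (β-1)
      ≤ ∫ t in (0:ℝ)..x, max 1 ((1/2:ℝ) ^ (β-1)) * t ^ (α-1) := by
    apply intervalIntegral.integral_mono_on hx.le
      (integrable_g15 hα hβ le_rfl (by norm_num) hx.le (by linarith))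
      ((intervalIntegral.intervalIntegrable_rpow' (by linarith)).const_mul _)
    intro t ht
    rcases eq_or_lt_of_le ht.1 with h0 | h0
    · rw [← h0]
      simp only [sub_zero, Real.one_rpow, mul_one]
      nlinarith [Real.rpow_nonneg (le_refl (0:ℝ)) (α-1)]
    · have h2 : (1 - t) ^ (β-1) ≤ max 1 ((1/2:ℝ) ^ (β-1)) :=
        (pow_sandwich15 (β-1) (by linarith [ht.2]) (by linarith)).2
      calc t ^ (α-1) * (1-t) ^ (β-1) ≤ t ^ (α-1) * max 1 ((1/2:ℝ) ^ (β-1)) :=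
            mul_le_mul_of_nonneg_left h2 (Real.rpow_nonneg h0.le _)
        _ = max 1 ((1/2:ℝ) ^ (β-1)) * t ^ (α-1) := mul_comm _ _
  rw [intervalIntegral.integral_const_mul, integral_rpow (Or.inl (by linarith))] at h1
  have he : α - 1 + 1 = α := by ring
  rw [he, Real.zero_rpow hα.ne'] at h1
  simpa using h1

lemma int_lower15 {α β x : ℝ} (hα : 0 < α) (hβ : 0 < β) (hx : 0 < x) (hx2 : x ≤ 1/2) :
    min 1 ((1/2:ℝ) ^ (β-1)) * (x ^ α / α) ≤ ∫ t in (0:ℝ)..x, t ^ (α-1) * (1-t) ^ (β-1) := by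
  have hM1 : min 1 ((1/2:ℝ) ^ (β-1)) ≤ 1 := min_le_left _ _
  have hMpos : 0 < min 1 ((1/2:ℝ) ^ (β-1)) :=
    lt_min one_pos (Real.rpow_pos_of_pos (by norm_num) _)
  have h1 : ∫ t in (0:ℝ)..x, min 1 ((1/2:ℝ) ^ (β-1)) * t ^ (α-1)
      ≤ ∫ t in (0:ℝ)..x, t ^ (α-1) * (1-t) ^ (β-1) := by
    apply intervalIntegral.integral_mono_on hx.le
      ((intervalIntegral.intervalIntegrable_rpow' (by linarith)).const_mul _)
      (integrable_g15 hα hβ le_rfl (by norm_num) hx.le (by linarith))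
    intro t ht
    rcases eq_or_lt_of_le ht.1 with h0 | h0
    · rw [← h0]
      simp only [sub_zero, Real.one_rpow, mul_one]
      nlinarith [Real.rpow_nonneg (le_refl (0:ℝ)) (α-1)]
    · have h2 : min 1 ((1/2:ℝ) ^ (β-1)) ≤ (1 - t) ^ (β-1) :=
        (pow_sandwich15 (β-1) (by linarith [ht.2]) (by linarith)).1
      calc min 1 ((1/2:ℝ) ^ (β-1)) * t ^ (α-1) = t ^ (α-1) * min 1 ((1/2:ℝ) ^ (β-1)) :=
            mul_comm _ _
        _ ≤ t ^ (α-1) * (1-t) ^ (β-1) :=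
            mul_le_mul_of_nonneg_left h2 (Real.rpow_nonneg h0.le _)
  rw [intervalIntegral.integral_const_mul, integral_rpow (Or.inl (by linarith))] at h1
  have he : α - 1 + 1 = α := by ring
  rw [he, Real.zero_rpow hα.ne'] at h1
  simpa using h1

lemma refl_int15 (α β : ℝ) :
    ∫ t in (0:ℝ)..1, t ^ (α-1) * (1-t) ^ (β-1)
      = ∫ t in (0:ℝ)..1, t ^ (β-1) * (1-t) ^ (α-1) := by
  have h := intervalIntegral.integral_comp_sub_left (a := 0) (b := 1)
    (fun t => t ^ (β-1) * (1-t) ^ (α-1)) 1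
  simp only [sub_sub_cancel] at h
  norm_num at h
  rw [← h]
  congr 1
  ext t
  rw [mul_comm]
set_option maxHeartbeats 2000000 in
lemma core15 (n m a₁ a₂ : ℝ) (hn : 0 < n) (hm : 0 < m)
    (ha₁ : 0 < a₁) (ha : a₁ < a₂)
    (p : ℝ → ℝ → ℝ)
    (hp : ∀ a, ∀ x, p a x = x ^ (n*a - 1) * (1 - x) ^ (m*a - 1)
        / (∫ t in (0:ℝ)..1, t ^ (n*a - 1) * (1 - t) ^ (m*a - 1)))
    (y : ℝ → ℝ)
    (hymaps : ∀ x ∈ Set.Ioo (0:ℝ) 1, y x ∈ Set.Ioo (0:ℝ) 1)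
    (hypush : ∀ x ∈ Set.Ioo (0:ℝ) 1,
        (∫ t in (0:ℝ)..(y x), p a₂ t) = ∫ t in (0:ℝ)..x, p a₁ t)
    (hyderiv : ∀ x ∈ Set.Ioo (0:ℝ) 1, deriv y x = p a₁ x / p a₂ (y x)) :
    Filter.Tendsto (deriv y) (nhdsWithin 0 (Set.Ioi 0)) Filter.atTop := by
  have ha₂ : 0 < a₂ := ha₁.trans ha
  have hα₁ : 0 < n * a₁ := mul_pos hn ha₁
  have hα₂ : 0 < n * a₂ := mul_pos hn ha₂
  have hβ₁ : 0 < m * a₁ := mul_pos hm ha₁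
  have hβ₂ : 0 < m * a₂ := mul_pos hm ha₂
  set B₁ : ℝ := ∫ t in (0:ℝ)..1, t ^ (n*a₁ - 1) * (1 - t) ^ (m*a₁ - 1) with hB₁def
  set B₂ : ℝ := ∫ t in (0:ℝ)..1, t ^ (n*a₂ - 1) * (1 - t) ^ (m*a₂ - 1) with hB₂def
  have hB₁pos : 0 < B₁ := int_pos15 hα₁ hβ₁ one_pos le_rfl
  have hB₂pos : 0 < B₂ := int_pos15 hα₂ hβ₂ one_pos le_rfl
  set R : ℝ := B₂ / B₁ with hRdef
  have hR : 0 < R := div_pos hB₂pos hB₁pos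
  set r : ℝ := a₁ / a₂ with hrdef
  have hr0 : 0 < r := div_pos ha₁ ha₂
  have hr1 : r < 1 := (div_lt_one ha₂).mpr ha
  set lo₁ : ℝ := min 1 ((1/2:ℝ) ^ (m*a₁ - 1)) with hlo₁def
  set hi₁ : ℝ := max 1 ((1/2:ℝ) ^ (m*a₁ - 1)) with hhi₁def
  set lo₂ : ℝ := min 1 ((1/2:ℝ) ^ (m*a₂ - 1)) with hlo₂def
  set hi₂ : ℝ := max 1 ((1/2:ℝ) ^ (m*a₂ - 1)) with hhi₂def
  have hlo₁ : 0 < lo₁ := lt_min one_pos (Real.rpow_pos_of_pos (by norm_num) _)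
  have hhi₁ : 0 < hi₁ := lt_of_lt_of_le one_pos (le_max_left _ _)
  have hlo₂ : 0 < lo₂ := lt_min one_pos (Real.rpow_pos_of_pos (by norm_num) _)
  have hhi₂ : 0 < hi₂ := lt_of_lt_of_le one_pos (le_max_left _ _)
  set K : ℝ := R * hi₁ * (n*a₂) / ((n*a₁) * lo₂) with hKdef
  set k : ℝ := R * lo₁ * (n*a₂) / ((n*a₁) * hi₂) with hkdef
  have hK : 0 < K := by positivity
  have hk : 0 < k := by positivity
  set c : ℝ := if 1 ≤ n*a₂ then K ^ (n*a₂)⁻¹ else k ^ (n*a₂)⁻¹ with hcdef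
  have hc : 0 < c := by
    rw [hcdef]; split_ifs
    · exact Real.rpow_pos_of_pos hK _
    · exact Real.rpow_pos_of_pos hk _
  set D : ℝ := R * lo₁ / (hi₂ * c ^ (n*a₂ - 1)) with hDdef
  have hcpow : 0 < c ^ (n*a₂ - 1) := Real.rpow_pos_of_pos hc _
  have hD : 0 < D := by positivity
  set δ : ℝ := ∫ t in (0:ℝ)..(1/2:ℝ), t ^ (n*a₂ - 1) * (1 - t) ^ (m*a₂ - 1) with hδdef
  have hδ : 0 < δ := int_pos15 hα₂ hβ₂ (by norm_num) (by norm_num)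
  -- eventual bound
  have hev : ∀ᶠ x in nhdsWithin 0 (Set.Ioi 0), D * x ^ (r - 1) ≤ deriv y x := by
    have hE1 : Set.Ioo (0:ℝ) (1/2) ∈ nhdsWithin 0 (Set.Ioi 0) :=
      Ioo_mem_nhdsGT_of_mem ⟨le_rfl, by norm_num⟩
    have hE2 : ∀ᶠ x in nhdsWithin 0 (Set.Ioi 0), R * (hi₁ * (x ^ (n*a₁) / (n*a₁))) < δ := by
      have htend : Filter.Tendsto (fun x : ℝ => R * (hi₁ * (x ^ (n*a₁) / (n*a₁))))
          (nhdsWithin 0 (Set.Ioi 0)) (nhds 0) := by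
        have h1 : ContinuousAt (fun x : ℝ => x ^ (n*a₁)) 0 :=
          Real.continuousAt_rpow_const 0 (n*a₁) (Or.inr hα₁.le)
        have h2 := ((h1.tendsto.div_const (n*a₁)).const_mul hi₁).const_mul R
        simp only [Real.zero_rpow hα₁.ne', zero_div, mul_zero] at h2
        exact h2.mono_left nhdsWithin_le_nhds
      exact htend.eventually_lt_const hδ
    filter_upwards [hE1, hE2] with x hx hxs
    have hx0 : 0 < x := hx.1
    have hxh : x ≤ 1/2 := hx.2.le
    have hxIoo : x ∈ Set.Ioo (0:ℝ) 1 := ⟨hx0, by linarith [hx.2]⟩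
    have hu : y x ∈ Set.Ioo (0:ℝ) 1 := hymaps x hxIoo
    -- push-forward in unnormalized form
    have hpush0 := hypush x hxIoo
    simp only [hp] at hpush0
    rw [intervalIntegral.integral_div, intervalIntegral.integral_div, ← hB₁def, ← hB₂def] at hpush0
    have hpush' : (∫ t in (0:ℝ)..(y x), t ^ (n*a₂ - 1) * (1 - t) ^ (m*a₂ - 1))
        = R * ∫ t in (0:ℝ)..x, t ^ (n*a₁ - 1) * (1 - t) ^ (m*a₁ - 1) := by
      rw [div_eq_div_iff hB₂pos.ne' hB₁pos.ne'] at hpush0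
      rw [hRdef]
      rw [div_mul_eq_mul_div, eq_div_iff hB₁pos.ne']
      linarith [hpush0]
    have hupper_x : (∫ t in (0:ℝ)..x, t ^ (n*a₁ - 1) * (1 - t) ^ (m*a₁ - 1))
        ≤ hi₁ * (x ^ (n*a₁) / (n*a₁)) := int_upper15 hα₁ hβ₁ hx0 hxh
    have hlower_x : lo₁ * (x ^ (n*a₁) / (n*a₁))
        ≤ ∫ t in (0:ℝ)..x, t ^ (n*a₁ - 1) * (1 - t) ^ (m*a₁ - 1) := int_lower15 hα₁ hβ₁ hx0 hxh
    -- y x ≤ 1/2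
    have hu2 : y x ≤ 1/2 := by
      by_contra hcon
      push_neg at hcon
      have h1 : δ ≤ ∫ t in (0:ℝ)..(y x), t ^ (n*a₂ - 1) * (1 - t) ^ (m*a₂ - 1) :=
        int_mono_end15 hα₂ hβ₂ (by norm_num) hcon.le hu.2.le
      have h2 : (∫ t in (0:ℝ)..(y x), t ^ (n*a₂ - 1) * (1 - t) ^ (m*a₂ - 1))
          ≤ R * (hi₁ * (x ^ (n*a₁) / (n*a₁))) := by
        rw [hpush']
        exact mul_le_mul_of_nonneg_left hupper_x hR.le
      linarith
    -- bounds on (y x) ^ (n*a₂)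
    have hbu : (y x) ^ (n*a₂) ≤ K * x ^ (n*a₁) := by
      have h1 : lo₂ * ((y x) ^ (n*a₂) / (n*a₂))
          ≤ ∫ t in (0:ℝ)..(y x), t ^ (n*a₂ - 1) * (1 - t) ^ (m*a₂ - 1) :=
        int_lower15 hα₂ hβ₂ hu.1 hu2
      have h2 : lo₂ * ((y x) ^ (n*a₂) / (n*a₂)) ≤ R * (hi₁ * (x ^ (n*a₁) / (n*a₁))) := by
        rw [hpush'] at h1
        exact le_trans h1 (mul_le_mul_of_nonneg_left hupper_x hR.le)
      have h3 : (y x) ^ (n*a₂) = (lo₂ * ((y x) ^ (n*a₂) / (n*a₂))) * ((n*a₂) / lo₂) := by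
        field_simp
      rw [h3, hKdef]
      calc (lo₂ * ((y x) ^ (n*a₂) / (n*a₂))) * ((n*a₂) / lo₂)
          ≤ (R * (hi₁ * (x ^ (n*a₁) / (n*a₁)))) * ((n*a₂) / lo₂) :=
            mul_le_mul_of_nonneg_right h2 (by positivity)
        _ = R * hi₁ * (n*a₂) / ((n*a₁) * lo₂) * x ^ (n*a₁) := by
            field_simp
    have hbl : k * x ^ (n*a₁) ≤ (y x) ^ (n*a₂) := by
      have h1 : (∫ t in (0:ℝ)..(y x), t ^ (n*a₂ - 1) * (1 - t) ^ (m*a₂ - 1))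
          ≤ hi₂ * ((y x) ^ (n*a₂) / (n*a₂)) := int_upper15 hα₂ hβ₂ hu.1 hu2
      have h2 : R * (lo₁ * (x ^ (n*a₁) / (n*a₁))) ≤ hi₂ * ((y x) ^ (n*a₂) / (n*a₂)) := by
        rw [hpush'] at h1
        exact le_trans (mul_le_mul_of_nonneg_left hlower_x hR.le) h1
      have h3 : (y x) ^ (n*a₂) = (hi₂ * ((y x) ^ (n*a₂) / (n*a₂))) * ((n*a₂) / hi₂) := by
        field_simp
      rw [h3, hkdef]
      calc R * lo₁ * (n*a₂) / ((n*a₁) * hi₂) * x ^ (n*a₁)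
          = (R * (lo₁ * (x ^ (n*a₁) / (n*a₁)))) * ((n*a₂) / hi₂) := by field_simp
        _ ≤ (hi₂ * ((y x) ^ (n*a₂) / (n*a₂))) * ((n*a₂) / hi₂) :=
            mul_le_mul_of_nonneg_right h2 (by positivity)
    -- the exponent conversion
    have hxr : (x ^ (n*a₁)) ^ (n*a₂)⁻¹ = x ^ r := by
      rw [← Real.rpow_mul hx0.le]
      congr 1
      rw [hrdef]
      field_simp [hn.ne', ha₂.ne']
    have hxrpos : 0 < x ^ r := Real.rpow_pos_of_pos hx0 _
    -- key power bound
    have hucases : (y x) ^ (n*a₂ - 1) ≤ c ^ (n*a₂ - 1) * x ^ (r * (n*a₂ - 1)) := by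
      have hkey : (c * x ^ r) ^ (n*a₂ - 1) = c ^ (n*a₂ - 1) * x ^ (r * (n*a₂ - 1)) := by
        rw [Real.mul_rpow hc.le hxrpos.le, ← Real.rpow_mul hx0.le]
      rw [← hkey]
      by_cases hcase : 1 ≤ n*a₂
      · have hcK : c = K ^ (n*a₂)⁻¹ := by rw [hcdef, if_pos hcase]
        have huK : y x ≤ c * x ^ r := by
          rw [hcK]
          calc y x = ((y x) ^ (n*a₂)) ^ (n*a₂)⁻¹ :=
                (Real.rpow_rpow_inv hu.1.le hα₂.ne').symm
            _ ≤ (K * x ^ (n*a₁)) ^ (n*a₂)⁻¹ :=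
                Real.rpow_le_rpow (Real.rpow_nonneg hu.1.le _) hbu (by positivity)
            _ = K ^ (n*a₂)⁻¹ * x ^ r := by
                rw [Real.mul_rpow hK.le (Real.rpow_nonneg hx0.le _), hxr]
        exact Real.rpow_le_rpow hu.1.le huK (by linarith)
      · push_neg at hcase
        have hcK : c = k ^ (n*a₂)⁻¹ := by rw [hcdef, if_neg (not_le.mpr hcase)]
        have huk : c * x ^ r ≤ y x := by
          rw [hcK]
          calc k ^ (n*a₂)⁻¹ * x ^ r = (k * x ^ (n*a₁)) ^ (n*a₂)⁻¹ := by
                rw [Real.mul_rpow hk.le (Real.rpow_nonneg hx0.le _), hxr]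
            _ ≤ ((y x) ^ (n*a₂)) ^ (n*a₂)⁻¹ :=
                Real.rpow_le_rpow (by positivity) hbl (by positivity)
            _ = y x := Real.rpow_rpow_inv hu.1.le hα₂.ne'
        exact Real.rpow_le_rpow_of_nonpos (by positivity) huk (by linarith)
    -- assemble the derivative bound
    have hg2pos : 0 < (y x) ^ (n*a₂ - 1) * (1 - y x) ^ (m*a₂ - 1) :=
      mul_pos (Real.rpow_pos_of_pos hu.1 _)
        (Real.rpow_pos_of_pos (by linarith [hu.2]) _)
    have hderiv_eq : deriv y x
        = R * ((x ^ (n*a₁ - 1) * (1 - x) ^ (m*a₁ - 1))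
            / ((y x) ^ (n*a₂ - 1) * (1 - y x) ^ (m*a₂ - 1))) := by
      rw [hyderiv x hxIoo, hp, hp, ← hB₁def, ← hB₂def, hRdef]
      field_simp
    have hnum : lo₁ * x ^ (n*a₁ - 1) ≤ x ^ (n*a₁ - 1) * (1 - x) ^ (m*a₁ - 1) := by
      have h2 : lo₁ ≤ (1 - x) ^ (m*a₁ - 1) :=
        (pow_sandwich15 (m*a₁ - 1) (by linarith) (by linarith)).1
      calc lo₁ * x ^ (n*a₁ - 1) = x ^ (n*a₁ - 1) * lo₁ := mul_comm _ _
        _ ≤ x ^ (n*a₁ - 1) * (1 - x) ^ (m*a₁ - 1) :=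
          mul_le_mul_of_nonneg_left h2 (Real.rpow_nonneg hx0.le _)
    have hden : (y x) ^ (n*a₂ - 1) * (1 - y x) ^ (m*a₂ - 1)
        ≤ (hi₂ * c ^ (n*a₂ - 1)) * x ^ (r * (n*a₂ - 1)) := by
      have h2 : (1 - y x) ^ (m*a₂ - 1) ≤ hi₂ :=
        (pow_sandwich15 (m*a₂ - 1) (by linarith) (by linarith [hu.1])).2
      calc (y x) ^ (n*a₂ - 1) * (1 - y x) ^ (m*a₂ - 1)
          ≤ (y x) ^ (n*a₂ - 1) * hi₂ :=
            mul_le_mul_of_nonneg_left h2 (Real.rpow_nonneg hu.1.le _)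
        _ ≤ (c ^ (n*a₂ - 1) * x ^ (r * (n*a₂ - 1))) * hi₂ :=
            mul_le_mul_of_nonneg_right hucases hhi₂.le
        _ = (hi₂ * c ^ (n*a₂ - 1)) * x ^ (r * (n*a₂ - 1)) := by ring
    have hsplit : x ^ (n*a₁ - 1) = x ^ (r - 1) * x ^ (r * (n*a₂ - 1)) := by
      rw [← Real.rpow_add hx0]
      congr 1
      rw [hrdef]
      field_simp [hn.ne', ha₂.ne']
      ring
    rw [hderiv_eq]
    have hxrr : 0 < x ^ (r * (n*a₂ - 1)) := Real.rpow_pos_of_pos hx0 _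
    calc D * x ^ (r - 1)
        = R * ((lo₁ * x ^ (n*a₁ - 1)) / ((hi₂ * c ^ (n*a₂ - 1)) * x ^ (r * (n*a₂ - 1)))) := by
          rw [hsplit, hDdef]
          field_simp
      _ ≤ R * ((x ^ (n*a₁ - 1) * (1 - x) ^ (m*a₁ - 1))
            / ((y x) ^ (n*a₂ - 1) * (1 - y x) ^ (m*a₂ - 1))) := by
          apply mul_le_mul_of_nonneg_left _ hR.le
          exact div_le_div₀ (mul_nonneg (Real.rpow_nonneg hx0.le _)
            (Real.rpow_nonneg (by linarith [hx.2] : (0:ℝ) ≤ 1 - x) _)) hnum hg2pos hden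
  -- conclude
  have hT : Filter.Tendsto (fun x : ℝ => D * x ^ (r - 1)) (nhdsWithin 0 (Set.Ioi 0))
      Filter.atTop := by
    apply Filter.Tendsto.const_mul_atTop hD
    have h := (tendsto_rpow_atTop (by linarith : (0:ℝ) < 1 - r)).comp tendsto_inv_nhdsGT_zero
    apply h.congr'
    filter_upwards [self_mem_nhdsWithin] with x hx
    have hx0 : (0:ℝ) < x := hx
    show (x⁻¹) ^ (1 - r) = x ^ (r - 1)
    rw [Real.inv_rpow hx0.le, ← Real.rpow_neg hx0.le]
    congr 1
    ring
  exact tendsto_atTop_mono' _ hev hT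

set_option maxHeartbeats 1000000 in
/-- For the Beta push-forward map y with F_{a₂}(y(x)) = F_{a₁}(x), 0 < a₁ < a₂, the
derivative of y tends to +∞ at both endpoints of (0,1). -/
theorem stmt_15 (n m a₁ a₂ : ℝ) (hn : 0 < n) (hm : 0 < m)
    (ha₁ : 0 < a₁) (ha : a₁ < a₂)
    (p : ℝ → ℝ → ℝ)
    (hp : ∀ a, ∀ x, p a x = x ^ (n*a - 1) * (1 - x) ^ (m*a - 1)
        / (∫ t in (0:ℝ)..1, t ^ (n*a - 1) * (1 - t) ^ (m*a - 1)))
    (y : ℝ → ℝ)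
    (hymaps : ∀ x ∈ Set.Ioo (0:ℝ) 1, y x ∈ Set.Ioo (0:ℝ) 1)
    (hymono : StrictMonoOn y (Set.Ioo (0:ℝ) 1))
    (hydiff : ∀ x ∈ Set.Ioo (0:ℝ) 1, DifferentiableAt ℝ y x)
    (hypush : ∀ x ∈ Set.Ioo (0:ℝ) 1,
        (∫ t in (0:ℝ)..(y x), p a₂ t) = ∫ t in (0:ℝ)..x, p a₁ t)
    (hyderiv : ∀ x ∈ Set.Ioo (0:ℝ) 1, deriv y x = p a₁ x / p a₂ (y x)) :
    Filter.Tendsto (deriv y) (nhdsWithin 0 (Set.Ioi 0)) Filter.atTop ∧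
    Filter.Tendsto (deriv y) (nhdsWithin 1 (Set.Iio 1)) Filter.atTop := by
  have ha₂ : 0 < a₂ := ha₁.trans ha
  constructor
  · exact core15 n m a₁ a₂ hn hm ha₁ ha p hp y hymaps hypush hyderiv
  · -- reflected density identity
    have hq : ∀ a x : ℝ, p a (1 - x) = x ^ (m*a - 1) * (1 - x) ^ (n*a - 1)
        / (∫ t in (0:ℝ)..1, t ^ (m*a - 1) * (1 - t) ^ (n*a - 1)) := by
      intro a x
      rw [hp, ← refl_int15 (n*a) (m*a), sub_sub_cancel]
      ring
    have hBpos : ∀ a : ℝ, 0 < a →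
        0 < ∫ t in (0:ℝ)..1, t ^ (n*a - 1) * (1 - t) ^ (m*a - 1) := fun a hba =>
      int_pos15 (mul_pos hn hba) (mul_pos hm hba) one_pos le_rfl
    have hpfun : ∀ a : ℝ, p a = fun t => t ^ (n*a - 1) * (1 - t) ^ (m*a - 1)
        / (∫ t in (0:ℝ)..1, t ^ (n*a - 1) * (1 - t) ^ (m*a - 1)) := fun a => funext (hp a)
    have hpint : ∀ a : ℝ, 0 < a → ∀ c d : ℝ, 0 ≤ c → c ≤ 1 → 0 ≤ d → d ≤ 1 →
        IntervalIntegrable (p a) volume c d := by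
      intro a hba c d h1 h2 h3 h4
      rw [hpfun a]
      exact (integrable_g15 (mul_pos hn hba) (mul_pos hm hba) h1 h2 h3 h4).div_const _
    have hone : ∀ a : ℝ, 0 < a → (∫ t in (0:ℝ)..1, p a t) = 1 := by
      intro a hba
      simp only [hp]
      rw [intervalIntegral.integral_div]
      exact div_self (hBpos a hba).ne'
    have hsplit : ∀ a : ℝ, 0 < a → ∀ s : ℝ, 0 ≤ s → s ≤ 1 →
        (∫ t in s..(1:ℝ), p a t) = 1 - ∫ t in (0:ℝ)..s, p a t := by
      intro a hba s h1 h2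
      have h := intervalIntegral.integral_add_adjacent_intervals
        (hpint a hba 0 s le_rfl (by norm_num) h1 h2)
        (hpint a hba s 1 h1 h2 (by norm_num) le_rfl)
      rw [hone a hba] at h
      linarith
    -- reflected map hypotheses
    have hzmaps : ∀ x ∈ Set.Ioo (0:ℝ) 1, (1 - y (1-x)) ∈ Set.Ioo (0:ℝ) 1 := by
      intro x hx
      have hx' : 1 - x ∈ Set.Ioo (0:ℝ) 1 := ⟨by linarith [hx.2], by linarith [hx.1]⟩
      have h := hymaps _ hx'
      exact ⟨by linarith [h.2], by linarith [h.1]⟩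
    have hzpush : ∀ x ∈ Set.Ioo (0:ℝ) 1,
        (∫ t in (0:ℝ)..(1 - y (1-x)), p a₂ (1 - t)) = ∫ t in (0:ℝ)..x, p a₁ (1 - t) := by
      intro x hx
      have hx' : 1 - x ∈ Set.Ioo (0:ℝ) 1 := ⟨by linarith [hx.2], by linarith [hx.1]⟩
      have hu := hymaps _ hx'
      rw [intervalIntegral.integral_comp_sub_left (p a₂) 1,
        intervalIntegral.integral_comp_sub_left (p a₁) 1]
      simp only [sub_sub_cancel, sub_zero]
      rw [hsplit a₂ ha₂ _ hu.1.le hu.2.le,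
        hsplit a₁ ha₁ _ hx'.1.le hx'.2.le,
        hypush _ hx']
    have hder : ∀ w : ℝ, deriv (fun x => 1 - y (1-x)) w = deriv y (1-w) := by
      intro w
      have h1 : deriv (fun x : ℝ => 1 - y (1-x)) w = -deriv (fun x : ℝ => y (1-x)) w :=
        deriv_const_sub 1
      rw [h1, deriv_comp_const_sub, neg_neg]
    have hzderiv : ∀ x ∈ Set.Ioo (0:ℝ) 1,
        deriv (fun x => 1 - y (1-x)) x = p a₁ (1-x) / p a₂ (1 - (1 - y (1-x))) := by
      intro x hx
      have hx' : 1 - x ∈ Set.Ioo (0:ℝ) 1 := ⟨by linarith [hx.2], by linarith [hx.1]⟩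
      rw [hder x, hyderiv _ hx', sub_sub_cancel]
    have core2 := core15 m n a₁ a₂ hm hn ha₁ ha (fun a x => p a (1-x)) (fun a x => hq a x)
      (fun x => 1 - y (1-x)) hzmaps hzpush hzderiv
    have hmap : Filter.Tendsto (fun x : ℝ => 1 - x) (nhdsWithin 1 (Set.Iio 1))
        (nhdsWithin 0 (Set.Ioi 0)) := by
      apply tendsto_nhdsWithin_of_tendsto_nhds_of_eventually_within
      · have hcont : Continuous (fun x : ℝ => 1 - x) := by continuity
        have h := hcont.tendsto 1
        norm_num at h
        exact h.mono_left nhdsWithin_le_nhds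
      · filter_upwards [self_mem_nhdsWithin] with x hx
        simp only [Set.mem_Iio] at hx
        simp only [Set.mem_Ioi]
        linarith
    have h3 := core2.comp hmap
    apply h3.congr
    intro x
    simp only [Function.comp_apply]
    rw [hder (1-x), sub_sub_cancel]
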